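/- Fix n ∈ ℕ and K ∈ [1,∞), and let (X,d_X) be a metric space. Then the following two assertions are equivalent: (1) for every n×n symmetric stochastic matrix A one has γ(A, d_X²) ≤ K/(1−λ₂(A)); (2) for every D ∈ (K,∞) and every x_1,…,x_n ∈ X there exists a nonconstant mapping f : {x_1,…,x_n} → ℓ₂ such that ∑_{i=1}^n ∑_{j=1}^n ‖f(x_i)−f(x_j)‖_{ℓ₂}² ≥ (‖f‖_Lip² / D) · ∑_{i=1}^n ∑_{j=1}^n d_X(x_i,x_j)². -/

import Mathlib

open scoped ENNReal

/-- An `n × n` real matrix is symmetric and stochastic. -/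
def IsSymmStochastic {n : ℕ} (A : Matrix (Fin n) (Fin n) ℝ) : Prop :=
  (∀ i j, A i j = A j i) ∧ (∀ i j, 0 ≤ A i j) ∧ ∀ i, ∑ j, A i j = 1

/-- The nonlinear spectral gap quantity `γ(A, d_X^p)`. -/
noncomputable def gammaNL {n : ℕ} (A : Matrix (Fin n) (Fin n) ℝ)
    (X : Type*) [PseudoMetricSpace X] (p : ℝ) : ℝ≥0∞ :=
  sInf {g : ℝ≥0∞ | 0 < g ∧ ∀ x : Fin n → X,
    ENNReal.ofReal ((∑ i, ∑ j, dist (x i) (x j) ^ p) / (n : ℝ) ^ 2) ≤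
      g / (n : ℝ≥0∞) * ENNReal.ofReal (∑ i, ∑ j, A i j * dist (x i) (x j) ^ p)}

/-- `λ₂(A)`, the second largest eigenvalue (counted with multiplicity) of a symmetric
stochastic matrix `A`, characterized via the Rayleigh quotient over vectors orthogonal to
the all-ones vector (which is an eigenvector of eigenvalue `λ₁(A) = 1`). -/
noncomputable def lambdaTwo {n : ℕ} (A : Matrix (Fin n) (Fin n) ℝ) : ℝ :=
  sSup {t : ℝ | ∃ x : Fin n → ℝ, (∑ i, x i = 0) ∧ (∑ i, x i ^ 2 = 1) ∧
    t = ∑ i, ∑ j, A i j * x i * x j}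

namespace GapDuality

variable {n : ℕ}

/-- Key algebraic identity. -/
lemma sum_sum_mul_sub_sq (c y : Fin n → ℝ) :
    ∑ i, ∑ j, c i * c j * (y i - y j) ^ 2 =
      2 * (∑ i, c i) * (∑ i, c i * y i ^ 2) - 2 * (∑ i, c i * y i) ^ 2 := by
  have inner : ∀ i, ∑ j, c i * c j * (y i - y j) ^ 2 =
      (c i * y i ^ 2) * (∑ j, c j) + c i * (∑ j, c j * y j ^ 2)
        - 2 * (c i * y i) * (∑ j, c j * y j) := by
    intro i
    have h : ∀ j, c i * c j * (y i - y j) ^ 2 =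
        (c i * y i ^ 2) * c j + c i * (c j * y j ^ 2) - 2 * (c i * y i) * (c j * y j) :=
      fun j => by ring
    rw [Finset.sum_congr rfl fun j _ => h j, Finset.sum_sub_distrib, Finset.sum_add_distrib,
      ← Finset.mul_sum, ← Finset.mul_sum, ← Finset.mul_sum]
  rw [Finset.sum_congr rfl fun i _ => inner i, Finset.sum_sub_distrib, Finset.sum_add_distrib,
    ← Finset.sum_mul, ← Finset.sum_mul, ← Finset.sum_mul, ← Finset.mul_sum]
  ring

lemma sum_sum_sub_sq (y : Fin n → ℝ) :
    ∑ i, ∑ j, (y i - y j) ^ 2 =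
      2 * n * (∑ i, y i ^ 2) - 2 * (∑ i, y i) ^ 2 := by
  have h := sum_sum_mul_sub_sq (fun _ => (1 : ℝ)) y
  simp only [one_mul] at h
  have hone : (∑ _i : Fin n, (1 : ℝ)) = n := by simp
  rw [h, hone]

variable {A : Matrix (Fin n) (Fin n) ℝ}

lemma colsum (hA : IsSymmStochastic A) (j : Fin n) : ∑ i, A i j = 1 := by
  rw [Finset.sum_congr rfl fun i _ => hA.1 i j]
  exact hA.2.2 j

/-- weighted version: `∑∑ A ij (z i - z j)² = 2 ∑ z² - 2 ∑∑ A z z`. -/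
lemma sum_sum_A_sub_sq (hA : IsSymmStochastic A) (z : Fin n → ℝ) :
    ∑ i, ∑ j, A i j * (z i - z j) ^ 2 =
      2 * (∑ i, z i ^ 2) - 2 * ∑ i, ∑ j, A i j * z i * z j := by
  have inner : ∀ i, ∑ j, A i j * (z i - z j) ^ 2 =
      z i ^ 2 * (∑ j, A i j) + (∑ j, A i j * z j ^ 2)
        - 2 * ∑ j, A i j * z i * z j := by
    intro i
    have h : ∀ j, A i j * (z i - z j) ^ 2 =
        z i ^ 2 * A i j + A i j * z j ^ 2 - 2 * (A i j * z i * z j) := fun j => by ring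
    rw [Finset.sum_congr rfl fun j _ => h j, Finset.sum_sub_distrib, Finset.sum_add_distrib,
      ← Finset.mul_sum, ← Finset.mul_sum]
  rw [Finset.sum_congr rfl fun i _ => inner i, Finset.sum_sub_distrib, Finset.sum_add_distrib]
  have h1 : ∑ i, z i ^ 2 * (∑ j, A i j) = ∑ i, z i ^ 2 :=
    Finset.sum_congr rfl fun i _ => by rw [hA.2.2 i, mul_one]
  have h2 : ∑ i : Fin n, ∑ j, A i j * z j ^ 2 = ∑ i, z i ^ 2 := by
    rw [Finset.sum_comm]
    refine Finset.sum_congr rfl fun j _ => ?_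
    rw [← Finset.sum_mul, colsum hA j, one_mul]
  have h3 : ∑ i : Fin n, 2 * ∑ j, A i j * z i * z j
      = 2 * ∑ i, ∑ j, A i j * z i * z j := by rw [Finset.mul_sum]
  rw [h1, h2, h3]; ring

lemma rayleigh_mem_le_one (hA : IsSymmStochastic A) (y : Fin n → ℝ) (hy1 : ∑ i, y i ^ 2 = 1) :
    ∑ i, ∑ j, A i j * y i * y j ≤ 1 := by
  have hle : ∀ i j, A i j * y i * y j ≤ (y i ^ 2 * A i j / 2 + A i j * y j ^ 2 / 2) := by
    intro i j
    have h1 : y i * y j ≤ (y i ^ 2 + y j ^ 2) / 2 := by nlinarith [sq_nonneg (y i - y j)]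
    have h2 := mul_le_mul_of_nonneg_left h1 (hA.2.1 i j)
    calc A i j * y i * y j = A i j * (y i * y j) := by ring
    _ ≤ A i j * ((y i ^ 2 + y j ^ 2) / 2) := h2
    _ = y i ^ 2 * A i j / 2 + A i j * y j ^ 2 / 2 := by ring
  calc ∑ i, ∑ j, A i j * y i * y j
      ≤ ∑ i, ∑ j, (y i ^ 2 * A i j / 2 + A i j * y j ^ 2 / 2) :=
        Finset.sum_le_sum fun i _ => Finset.sum_le_sum fun j _ => hle i j
    _ = 1 := by
        have inner : ∀ i : Fin n, ∑ j, (y i ^ 2 * A i j / 2 + A i j * y j ^ 2 / 2) =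
            y i ^ 2 * (∑ j, A i j) / 2 + (∑ j, A i j * y j ^ 2) / 2 := by
          intro i
          rw [Finset.sum_add_distrib, ← Finset.sum_div, ← Finset.mul_sum, ← Finset.sum_div]
        rw [Finset.sum_congr rfl fun i _ => inner i, Finset.sum_add_distrib]
        have h1 : ∑ i, y i ^ 2 * (∑ j, A i j) / 2 = 1 / 2 := by
          have : ∀ i : Fin n, y i ^ 2 * (∑ j, A i j) / 2 = y i ^ 2 / 2 := fun i => by
            rw [hA.2.2 i, mul_one]
          rw [Finset.sum_congr rfl fun i _ => this i, ← Finset.sum_div, hy1]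
        have h2 : ∑ i : Fin n, (∑ j, A i j * y j ^ 2) / 2 = 1 / 2 := by
          rw [← Finset.sum_div, Finset.sum_comm]
          have : ∀ j : Fin n, ∑ i, A i j * y j ^ 2 = y j ^ 2 := fun j => by
            rw [← Finset.sum_mul, colsum hA j, one_mul]
          rw [Finset.sum_congr rfl fun j _ => this j, hy1]
        rw [h1, h2]; norm_num

lemma lambdaTwo_bddAbove (hA : IsSymmStochastic A) :
    BddAbove {t : ℝ | ∃ x : Fin n → ℝ, (∑ i, x i = 0) ∧ (∑ i, x i ^ 2 = 1) ∧
      t = ∑ i, ∑ j, A i j * x i * x j} := by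
  refine ⟨1, fun t ht => ?_⟩
  obtain ⟨y, _, hy1, rfl⟩ := ht
  exact rayleigh_mem_le_one hA y hy1

/-- Rayleigh quotient bound: for `∑ z = 0`, `∑∑ A z z ≤ lam ∑ z²`. -/
lemma rayleigh_le (hA : IsSymmStochastic A) (z : Fin n → ℝ) (hz : ∑ i, z i = 0) :
    ∑ i, ∑ j, A i j * z i * z j ≤ lambdaTwo A * ∑ i, z i ^ 2 := by
  set Q := ∑ i, z i ^ 2 with hQ
  have hQ0 : 0 ≤ Q := Finset.sum_nonneg fun i _ => sq_nonneg _
  rcases eq_or_lt_of_le hQ0 with h0 | hpos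
  · have hz0 : ∀ i, z i = 0 := by
      intro i
      have h := (Finset.sum_eq_zero_iff_of_nonneg (fun i _ => sq_nonneg (z i))).mp h0.symm i
        (Finset.mem_univ i)
      exact sq_eq_zero_iff.mp h
    have hL : ∑ i, ∑ j, A i j * z i * z j = 0 := by simp [hz0]
    rw [hL, ← h0, mul_zero]
  · set y : Fin n → ℝ := fun i => z i / Real.sqrt Q with hy
    have hsq : Real.sqrt Q ^ 2 = Q := Real.sq_sqrt hQ0
    have hsqpos : 0 < Real.sqrt Q := Real.sqrt_pos.mpr hpos
    have hy0 : ∑ i, y i = 0 := by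
      simp only [hy, ← Finset.sum_div, hz, zero_div]
    have hy1 : ∑ i, y i ^ 2 = 1 := by
      simp only [hy, div_pow, ← Finset.sum_div, hsq, ← hQ]
      exact div_self (ne_of_gt hpos)
    have hmem : (∑ i, ∑ j, A i j * y i * y j) ∈ {t : ℝ | ∃ x : Fin n → ℝ,
        (∑ i, x i = 0) ∧ (∑ i, x i ^ 2 = 1) ∧ t = ∑ i, ∑ j, A i j * x i * x j} :=
      ⟨y, hy0, hy1, rfl⟩
    have hle : ∑ i, ∑ j, A i j * y i * y j ≤ lambdaTwo A :=
      le_csSup (lambdaTwo_bddAbove hA) hmem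
    have hconv : ∑ i, ∑ j, A i j * z i * z j = Q * ∑ i, ∑ j, A i j * y i * y j := by
      rw [Finset.mul_sum]
      refine Finset.sum_congr rfl fun i _ => ?_
      rw [Finset.mul_sum]
      refine Finset.sum_congr rfl fun j _ => ?_
      simp only [hy]
      field_simp
      rw [hsq]
    rw [hconv]
    calc Q * ∑ i, ∑ j, A i j * y i * y j ≤ Q * lambdaTwo A :=
          mul_le_mul_of_nonneg_left hle hQ0
      _ = lambdaTwo A * Q := mul_comm _ _

/-- Scalar Poincaré inequality. -/
lemma scalar_poincare (hA : IsSymmStochastic A) (v : Fin n → ℝ) :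
    (1 - lambdaTwo A) * ∑ i, ∑ j, (v i - v j) ^ 2 ≤
      n * ∑ i, ∑ j, A i j * (v i - v j) ^ 2 := by
  rcases Nat.eq_zero_or_pos n with rfl | hn
  · simp
  have hn0 : (n : ℝ) ≠ 0 := by positivity
  set μ : ℝ := (∑ i, v i) / n with hμ
  set z : Fin n → ℝ := fun i => v i - μ with hzdef
  have hz : ∑ i, z i = 0 := by
    simp only [hzdef, Finset.sum_sub_distrib, Finset.sum_const, Finset.card_fin, nsmul_eq_mul, hμ]
    field_simp
    ring
  have hvz : ∀ i j, v i - v j = z i - z j := fun i j => by simp [hzdef]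
  have e1 : ∑ i, ∑ j, (v i - v j) ^ 2 = 2 * n * (∑ i, z i ^ 2) := by
    rw [Finset.sum_congr rfl fun i _ => Finset.sum_congr rfl fun j _ => by rw [hvz i j]]
    rw [sum_sum_sub_sq, hz]
    ring
  have e2 : ∑ i, ∑ j, A i j * (v i - v j) ^ 2 =
      2 * (∑ i, z i ^ 2) - 2 * ∑ i, ∑ j, A i j * z i * z j := by
    rw [Finset.sum_congr rfl fun i _ => Finset.sum_congr rfl fun j _ => by rw [hvz i j]]
    exact sum_sum_A_sub_sq hA z
  rw [e1, e2]
  have hray := rayleigh_le hA z hz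
  have hQ0 : 0 ≤ ∑ i, z i ^ 2 := Finset.sum_nonneg fun i _ => sq_nonneg _
  have hn' : (1 : ℝ) ≤ n := by exact_mod_cast hn
  nlinarith [hray, hQ0, hn']


/-! lp space helpers -/

lemma rpow_two_eq_sq (a : ℝ) : ‖a‖ ^ (2 : ℝ) = a ^ 2 := by
  rw [show (2:ℝ) = ((2:ℕ):ℝ) by norm_num, Real.rpow_natCast, Real.norm_eq_abs, sq_abs]

lemma norm_sq_eq_tsum (g : lp (fun _ : ℕ => ℝ) 2) : ‖g‖ ^ 2 = ∑' k, (g k) ^ 2 := by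
  have hp : 0 < (2 : ℝ≥0∞).toReal := by norm_num
  have h := lp.norm_rpow_eq_tsum hp g
  rw [show (2 : ℝ≥0∞).toReal = (2 : ℝ) by norm_num] at h
  rw [show ‖g‖ ^ (2:ℕ) = ‖g‖ ^ (2:ℝ) by
    rw [show (2:ℝ) = ((2:ℕ):ℝ) by norm_num, Real.rpow_natCast], h]
  exact tsum_congr fun k => rpow_two_eq_sq _

lemma summable_sq (g : lp (fun _ : ℕ => ℝ) 2) : Summable fun k => (g k) ^ 2 := by
  have hp : 0 < (2 : ℝ≥0∞).toReal := by norm_num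
  have h := (lp.memℓp g).summable hp
  rw [show (2 : ℝ≥0∞).toReal = (2 : ℝ) by norm_num] at h
  exact h.congr fun k => rpow_two_eq_sq _

lemma summable_finset_sum {ι β : Type*} {s : Finset ι} (f : ι → β → ℝ)
    (h : ∀ i ∈ s, Summable (f i)) : Summable fun b => ∑ i ∈ s, f i b := by
  classical
  induction s using Finset.induction with
  | empty => simpa using summable_zero
  | insert _ _ hx ih =>
    rename_i a t
    simp only [Finset.sum_insert hx]
    exact (h a (Finset.mem_insert_self a t)).add (ih fun i hi => h i (Finset.mem_insert_of_mem hi))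

/-- Hilbert space Poincaré inequality for `lp 2`. -/
lemma hilbert_poincare (hA : IsSymmStochastic A) (f : Fin n → lp (fun _ : ℕ => ℝ) 2) :
    (1 - lambdaTwo A) * ∑ i, ∑ j, ‖f i - f j‖ ^ 2 ≤
      n * ∑ i, ∑ j, A i j * ‖f i - f j‖ ^ 2 := by
  have hsub : ∀ (i j : Fin n) (k : ℕ), (↑(f i - f j) : ℕ → ℝ) k = f i k - f j k := by
    intro i j k; rw [lp.coeFn_sub]; rfl
  have hnorm : ∀ i j : Fin n, ‖f i - f j‖ ^ 2 = ∑' k, (f i k - f j k) ^ 2 := by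
    intro i j
    rw [norm_sq_eq_tsum (f i - f j)]
    exact tsum_congr fun k => by rw [hsub]
  have hsumm : ∀ i j : Fin n, Summable fun k => (f i k - f j k) ^ 2 := by
    intro i j
    exact (summable_sq (f i - f j)).congr fun k => by rw [hsub]
  have T1 : ∑ i, ∑ j, ‖f i - f j‖ ^ 2 = ∑' k, ∑ i, ∑ j, (f i k - f j k) ^ 2 := by
    have step2 : ∀ i : Fin n, ∑ j, ∑' k, (f i k - f j k) ^ 2
        = ∑' k, ∑ j, (f i k - f j k) ^ 2 := fun i =>
      (Summable.tsum_finsetSum fun j _ => hsumm i j).symm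
    rw [Finset.sum_congr rfl fun i _ => Finset.sum_congr rfl fun j _ => hnorm i j,
      Finset.sum_congr rfl fun i _ => step2 i]
    exact (Summable.tsum_finsetSum fun i _ => summable_finset_sum _ fun j _ => hsumm i j).symm
  have T2 : ∑ i, ∑ j, A i j * ‖f i - f j‖ ^ 2
      = ∑' k, ∑ i, ∑ j, A i j * (f i k - f j k) ^ 2 := by
    have step1 : ∀ i j : Fin n, A i j * ‖f i - f j‖ ^ 2
        = ∑' k, A i j * (f i k - f j k) ^ 2 := fun i j => by
      rw [hnorm i j, tsum_mul_left]
    have step2 : ∀ i : Fin n, ∑ j, ∑' k, A i j * (f i k - f j k) ^ 2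
        = ∑' k, ∑ j, A i j * (f i k - f j k) ^ 2 := fun i =>
      (Summable.tsum_finsetSum fun j _ => (hsumm i j).mul_left _).symm
    rw [Finset.sum_congr rfl fun i _ => Finset.sum_congr rfl fun j _ => step1 i j,
      Finset.sum_congr rfl fun i _ => step2 i]
    exact (Summable.tsum_finsetSum fun i _ => summable_finset_sum _ fun j _ => (hsumm i j).mul_left _).symm
  rw [T1, T2, ← tsum_mul_left, ← tsum_mul_left]
  refine Summable.tsum_le_tsum (fun k => scalar_poincare hA (fun i => f i k)) ?_ ?_
  · exact (summable_finset_sum _ fun i _ =>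
      summable_finset_sum _ fun j _ => hsumm i j).mul_left _
  · exact (summable_finset_sum _ fun i _ =>
      summable_finset_sum _ fun j _ => (hsumm i j).mul_left _).mul_left _

/-- Direction (2) → (1). -/
lemma dir_2_to_1 {K : ℝ} (hK : 1 ≤ K) (X : Type*) [MetricSpace X]
    (h2 : ∀ D : ℝ, K < D → ∀ x : Fin n → X,
        ∃ (f : Fin n → lp (fun _ : ℕ => ℝ) 2) (L : ℝ),
          0 < L ∧
          (∀ i j, ‖f i - f j‖ ≤ L * dist (x i) (x j)) ∧
          L ^ 2 / D * ∑ i, ∑ j, dist (x i) (x j) ^ 2 ≤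
            ∑ i, ∑ j, ‖f i - f j‖ ^ 2)
    (A : Matrix (Fin n) (Fin n) ℝ) (hA : IsSymmStochastic A) :
    gammaNL A X 2 ≤ ENNReal.ofReal K / ENNReal.ofReal (1 - lambdaTwo A) := by
  set lam := lambdaTwo A with hlam
  rcases le_or_gt (1 - lam) 0 with hneg | hlampos
  · rw [ENNReal.ofReal_eq_zero.mpr hneg, ENNReal.div_zero (by
      simp only [ne_eq, ENNReal.ofReal_eq_zero, not_le]; linarith)]
    exact le_top
  -- 0 < 1 - lam
  have hKpos : (0:ℝ) < K := by linarith
  have hbK : ENNReal.ofReal K / ENNReal.ofReal (1 - lam) = ENNReal.ofReal (K / (1 - lam)) :=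
    (ENNReal.ofReal_div_of_pos hlampos).symm
  rcases Nat.eq_zero_or_pos n with rfl | hn
  · -- n = 0 : the target value is itself a member of the defining set
    refine sInf_le ⟨?_, ?_⟩
    · rw [hbK]; exact ENNReal.ofReal_pos.mpr (by positivity)
    · intro x
      simp
  have hn' : (0:ℝ) < (n:ℝ) := by exact_mod_cast hn
  rw [hbK]
  refine ENNReal.le_of_forall_pos_le_add fun ε hε _ => ?_
  have hεR : (0:ℝ) < (ε:ℝ) := hε
  set D : ℝ := K + (1 - lam) * ε with hD
  have hKD : K < D := by
    have : 0 < (1 - lam) * ε := by positivity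
    linarith
  have hD0 : 0 < D := by linarith
  have hmem : ENNReal.ofReal (D / (1 - lam)) ∈ {g : ℝ≥0∞ | 0 < g ∧ ∀ x : Fin n → X,
      ENNReal.ofReal ((∑ i, ∑ j, dist (x i) (x j) ^ (2:ℝ)) / (n : ℝ) ^ 2) ≤
        g / (n : ℝ≥0∞) * ENNReal.ofReal (∑ i, ∑ j, A i j * dist (x i) (x j) ^ (2:ℝ))} := by
    constructor
    · exact ENNReal.ofReal_pos.mpr (by positivity)
    · intro x
      obtain ⟨f, L, hL, hLip, hlow⟩ := h2 D hKD x
      have hpow : ∀ (a b : X), dist a b ^ (2:ℝ) = dist a b ^ (2:ℕ) := fun a b => by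
        rw [← Real.rpow_natCast (dist a b) 2]; norm_num
      set Sd := ∑ i, ∑ j, dist (x i) (x j) ^ (2:ℕ) with hSd
      set SA := ∑ i, ∑ j, A i j * dist (x i) (x j) ^ (2:ℕ) with hSA
      set Sf := ∑ i, ∑ j, ‖f i - f j‖ ^ 2 with hSf
      set SAf := ∑ i, ∑ j, A i j * ‖f i - f j‖ ^ 2 with hSAf
      have hSd0 : 0 ≤ Sd := Finset.sum_nonneg fun i _ => Finset.sum_nonneg fun j _ => by
        positivity
      have hSA0 : 0 ≤ SA := Finset.sum_nonneg fun i _ => Finset.sum_nonneg fun j _ =>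
        mul_nonneg (hA.2.1 i j) (by positivity)
      -- Lipschitz comparison
      have hAf : SAf ≤ L ^ 2 * SA := by
        have hterm : ∀ i j, A i j * ‖f i - f j‖ ^ 2
            ≤ L ^ 2 * (A i j * dist (x i) (x j) ^ 2) := by
          intro i j
          have h1 : ‖f i - f j‖ ^ 2 ≤ (L * dist (x i) (x j)) ^ 2 := by
            have := hLip i j
            nlinarith [norm_nonneg (f i - f j), dist_nonneg (x := x i) (y := x j)]
          calc A i j * ‖f i - f j‖ ^ 2 ≤ A i j * (L * dist (x i) (x j)) ^ 2 :=
                mul_le_mul_of_nonneg_left h1 (hA.2.1 i j)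
          _ = L ^ 2 * (A i j * dist (x i) (x j) ^ 2) := by ring
        calc SAf ≤ ∑ i, ∑ j, L ^ 2 * (A i j * dist (x i) (x j) ^ 2) :=
              Finset.sum_le_sum fun i _ => Finset.sum_le_sum fun j _ => hterm i j
        _ = L ^ 2 * SA := by
            rw [hSA, Finset.mul_sum]
            exact Finset.sum_congr rfl fun i _ => by rw [Finset.mul_sum]
      have hp := hilbert_poincare hA f
      rw [← hSf, ← hSAf, ← hlam] at hp
      -- main real inequality
      have key : (1 - lam) * Sd ≤ D * ((n:ℝ) * SA) := by
        have c1 : (1 - lam) * (L ^ 2 / D * Sd) ≤ (1 - lam) * Sf :=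
          mul_le_mul_of_nonneg_left hlow (le_of_lt hlampos)
        have c3 : (n:ℝ) * SAf ≤ (n:ℝ) * (L ^ 2 * SA) :=
          mul_le_mul_of_nonneg_left hAf (by positivity)
        have c4 : (1 - lam) * (L ^ 2 / D * Sd) ≤ (n:ℝ) * (L ^ 2 * SA) :=
          le_trans c1 (le_trans hp c3)
        have key2 : (1 - lam) * Sd * L ^ 2 ≤ D * ((n:ℝ) * SA) * L ^ 2 := by
          have e : (1 - lam) * Sd * L ^ 2 = D * ((1 - lam) * (L ^ 2 / D * Sd)) := by
            field_simp
          rw [e]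
          calc D * ((1 - lam) * (L ^ 2 / D * Sd)) ≤ D * ((n:ℝ) * (L ^ 2 * SA)) :=
                mul_le_mul_of_nonneg_left c4 hD0.le
          _ = D * ((n:ℝ) * SA) * L ^ 2 := by ring
        exact le_of_mul_le_mul_right key2 (by positivity)
      -- transfer to ℝ≥0∞
      have hrw : ∀ (S : ℝ), (∑ i, ∑ j, A i j * dist (x i) (x j) ^ (2:ℝ)) = SA := by
        intro _
        rw [hSA]
        exact Finset.sum_congr rfl fun i _ => Finset.sum_congr rfl fun j _ => by
          rw [hpow]
      have hrw2 : (∑ i, ∑ j, dist (x i) (x j) ^ (2:ℝ)) = Sd := by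
        rw [hSd]
        exact Finset.sum_congr rfl fun i _ => Finset.sum_congr rfl fun j _ => hpow _ _
      rw [hrw2, hrw 0]
      have hreal : Sd / (n:ℝ) ^ 2 ≤ D / (1 - lam) / (n:ℝ) * SA := by
        rw [div_le_iff₀ (by positivity : (0:ℝ) < (n:ℝ) ^ 2)]
        have e : D / (1 - lam) / (n:ℝ) * SA * (n:ℝ) ^ 2 = D * ((n:ℝ) * SA) / (1 - lam) := by
          field_simp
        rw [e, le_div_iff₀ hlampos]
        linarith [key]
      calc ENNReal.ofReal (Sd / (n:ℝ) ^ 2)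
          ≤ ENNReal.ofReal (D / (1 - lam) / (n:ℝ) * SA) := ENNReal.ofReal_le_ofReal hreal
        _ = ENNReal.ofReal (D / (1 - lam)) / (n : ℝ≥0∞) * ENNReal.ofReal SA := by
            rw [ENNReal.ofReal_mul (by positivity), ENNReal.ofReal_div_of_pos hn',
              ENNReal.ofReal_natCast]
  have hsInf : gammaNL A X 2 ≤ ENNReal.ofReal (D / (1 - lam)) := sInf_le hmem
  have hsplit : D / (1 - lam) = K / (1 - lam) + (ε:ℝ) := by
    rw [hD]
    field_simp
  rw [hsplit, ENNReal.ofReal_add (by positivity) hεR.le, ENNReal.ofReal_coe_nnreal] at hsInf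
  exact hsInf


/-! ### Helpers for indicator sums -/

lemma sum_delta_mul (i₀ : Fin n) (a : ℝ) (g : Fin n → ℝ) :
    ∑ i, (if i = i₀ then a else 0) * g i = a * g i₀ := by
  have h : ∀ i, (if i = i₀ then a else 0) * g i = if i = i₀ then a * g i else 0 := by
    intro i; split <;> simp
  rw [Finset.sum_congr rfl fun i _ => h i, Finset.sum_ite_eq' Finset.univ i₀ fun i => a * g i]
  simp

lemma sum_cvec_mul {i₀ i₁ : Fin n} (hne : i₀ ≠ i₁) (a b : ℝ) (g : Fin n → ℝ) :
    ∑ i, (if i = i₀ then a else if i = i₁ then b else 0) * g i = a * g i₀ + b * g i₁ := by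
  have h : ∀ i, (if i = i₀ then a else if i = i₁ then b else 0) * g i
      = (if i = i₀ then a * g i else 0) + (if i = i₁ then b * g i else 0) := by
    intro i
    rcases eq_or_ne i i₀ with rfl | h0
    · rw [if_pos rfl, if_pos rfl, if_neg hne, add_zero]
    · rw [if_neg h0, if_neg h0, zero_add]
      split <;> simp
  rw [Finset.sum_congr rfl fun i _ => h i, Finset.sum_add_distrib,
    Finset.sum_ite_eq' Finset.univ i₀ fun i => a * g i,
    Finset.sum_ite_eq' Finset.univ i₁ fun i => b * g i]
  simp

/-! ### The real inequality extracted from assertion (1) -/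

lemma dist_rpow_eq_pow {X : Type*} [MetricSpace X] (a b : X) :
    dist a b ^ (2:ℝ) = dist a b ^ (2:ℕ) := by
  rw [← Real.rpow_natCast (dist a b) 2]; norm_num

set_option maxHeartbeats 800000 in
lemma gamma_real_bound {K : ℝ} (hK : 1 ≤ K) {X : Type*} [MetricSpace X]
    (hA : IsSymmStochastic A)
    (h1 : gammaNL A X 2 ≤ ENNReal.ofReal K / ENNReal.ofReal (1 - lambdaTwo A))
    (hn : 0 < n) (x : Fin n → X) :
    (1 - lambdaTwo A) * (∑ i, ∑ j, dist (x i) (x j) ^ 2)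
      ≤ K * n * (∑ i, ∑ j, A i j * dist (x i) (x j) ^ 2) := by
  set lam := lambdaTwo A with hlam
  set Sd := ∑ i, ∑ j, dist (x i) (x j) ^ (2:ℕ) with hSd
  set SA := ∑ i, ∑ j, A i j * dist (x i) (x j) ^ (2:ℕ) with hSA
  have hSd0 : 0 ≤ Sd := Finset.sum_nonneg fun i _ => Finset.sum_nonneg fun j _ => by positivity
  have hSA0 : 0 ≤ SA := Finset.sum_nonneg fun i _ => Finset.sum_nonneg fun j _ =>
    mul_nonneg (hA.2.1 i j) (by positivity)
  have hn' : (0:ℝ) < (n:ℝ) := by exact_mod_cast hn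
  rcases le_or_gt (1 - lam) 0 with hneg | hpos
  · calc (1 - lam) * Sd ≤ 0 := mul_nonpos_of_nonpos_of_nonneg hneg hSd0
    _ ≤ K * n * SA := by positivity
  by_contra hcon
  push_neg at hcon
  -- hcon : K * n * SA < (1 - lam) * Sd
  set D' : ℝ := if SA = 0 then K + 1 else (K * n * SA + (1 - lam) * Sd) / (2 * n * SA) with hD'
  have hKD' : K < D' := by
    rw [hD']
    split
    · linarith
    · rename_i hSAne
      have hSApos : 0 < SA := lt_of_le_of_ne hSA0 (Ne.symm hSAne)
      rw [lt_div_iff₀ (by positivity)]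
      nlinarith
  have hlt : D' * ((n:ℝ) * SA) < (1 - lam) * Sd := by
    rcases eq_or_ne SA 0 with hSA' | hSAne
    · rw [hSA'] at hcon ⊢
      simp only [mul_zero] at hcon ⊢
      exact hcon
    · have hSApos : 0 < SA := lt_of_le_of_ne hSA0 (Ne.symm hSAne)
      rw [hD', if_neg hSAne, div_mul_eq_mul_div, div_lt_iff₀ (by positivity)]
      nlinarith [mul_lt_mul_of_pos_right hcon (show (0:ℝ) < (n:ℝ) * SA by positivity)]
  have hD'pos : 0 < D' := by linarith
  -- pass through the ENNReal infimum
  have hlt' : gammaNL A X 2 < ENNReal.ofReal (D' / (1 - lam)) := by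
    refine lt_of_le_of_lt h1 ?_
    rw [(ENNReal.ofReal_div_of_pos hpos).symm]
    have hD'pos : 0 < D' := by linarith
    exact (ENNReal.ofReal_lt_ofReal_iff (div_pos hD'pos hpos)).mpr
      ((div_lt_div_iff_of_pos_right hpos).mpr hKD')
  rw [gammaNL] at hlt'
  obtain ⟨g, hgmem, hglt⟩ := sInf_lt_iff.mp hlt'
  have hgx := hgmem.2 x
  have hmono : g / (n:ℝ≥0∞) * ENNReal.ofReal (∑ i, ∑ j, A i j * dist (x i) (x j) ^ (2:ℝ))
      ≤ ENNReal.ofReal (D' / (1 - lam)) / (n:ℝ≥0∞)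
        * ENNReal.ofReal (∑ i, ∑ j, A i j * dist (x i) (x j) ^ (2:ℝ)) :=
    mul_le_mul_left (ENNReal.div_le_div_right hglt.le _) _
  have hup := le_trans hgx hmono
  have hrwd : (∑ i, ∑ j, dist (x i) (x j) ^ (2:ℝ)) = Sd :=
    Finset.sum_congr rfl fun i _ => Finset.sum_congr rfl fun j _ => dist_rpow_eq_pow _ _
  have hrwA : (∑ i, ∑ j, A i j * dist (x i) (x j) ^ (2:ℝ)) = SA :=
    Finset.sum_congr rfl fun i _ => Finset.sum_congr rfl fun j _ => by
      rw [dist_rpow_eq_pow]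
  rw [hrwd, hrwA] at hup
  have hDnonneg : 0 ≤ D' / (1 - lam) / (n:ℝ) := by
    apply div_nonneg (div_nonneg hD'pos.le hpos.le) hn'.le
  rw [show ENNReal.ofReal (D' / (1 - lam)) / (n:ℝ≥0∞) * ENNReal.ofReal SA
      = ENNReal.ofReal (D' / (1 - lam) / (n:ℝ) * SA) by
    rw [ENNReal.ofReal_mul hDnonneg, ENNReal.ofReal_div_of_pos hn',
      ENNReal.ofReal_natCast]] at hup
  have hreal : Sd / (n:ℝ) ^ 2 ≤ D' / (1 - lam) / (n:ℝ) * SA :=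
    (ENNReal.ofReal_le_ofReal_iff (mul_nonneg hDnonneg hSA0)).mp hup
  rw [div_le_iff₀ (by positivity : (0:ℝ) < (n:ℝ) ^ 2)] at hreal
  have e : D' / (1 - lam) / (n:ℝ) * SA * (n:ℝ) ^ 2 = D' * ((n:ℝ) * SA) / (1 - lam) := by
    field_simp
  rw [e, le_div_iff₀ hpos] at hreal
  nlinarith

/-! ### Existence of a Rayleigh maximizer -/

lemma exists_unit_meanzero (hn : 2 ≤ n) :
    ∃ y : Fin n → ℝ, (∑ i, y i = 0) ∧ (∑ i, y i ^ 2 = 1) := by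
  have h0 : (0:ℕ) < n := by omega
  have h1 : (1:ℕ) < n := by omega
  set i₀ : Fin n := ⟨0, h0⟩
  set i₁ : Fin n := ⟨1, h1⟩
  have hne : i₀ ≠ i₁ := by simp [i₀, i₁, Fin.ext_iff]
  set a : ℝ := Real.sqrt (1/2) with ha
  have ha2 : a ^ 2 = 1/2 := Real.sq_sqrt (by norm_num)
  refine ⟨fun i => if i = i₀ then a else if i = i₁ then -a else 0, ?_, ?_⟩
  · rw [show (∑ i, (if i = i₀ then a else if i = i₁ then -a else 0))
        = ∑ i, (if i = i₀ then a else if i = i₁ then -a else 0) * 1 by simp,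
      sum_cvec_mul hne a (-a) (fun _ => (1:ℝ))]
    ring
  · have hsq : ∀ i, (if i = i₀ then a else if i = i₁ then -a else 0) ^ 2
        = (if i = i₀ then a^2 else if i = i₁ then a^2 else 0) * 1 := by
      intro i
      rcases eq_or_ne i i₀ with rfl | h0'
      · simp
      rcases eq_or_ne i i₁ with rfl | h1'
      · simp [h0']
      · simp [h0', h1']
    rw [Finset.sum_congr rfl fun i _ => hsq i, sum_cvec_mul hne (a^2) (a^2) (fun _ => (1:ℝ))]
    rw [ha2]; norm_num

lemma lambdaTwo_exists_max (hA : IsSymmStochastic A) (hn : 2 ≤ n) :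
    ∃ y : Fin n → ℝ, (∑ i, y i = 0) ∧ (∑ i, y i ^ 2 = 1) ∧
      (lambdaTwo A = ∑ i, ∑ j, A i j * y i * y j) ∧
      (∀ z : Fin n → ℝ, (∑ i, z i = 0) → (∑ i, z i ^ 2 = 1) →
        ∑ i, ∑ j, A i j * z i * z j ≤ ∑ i, ∑ j, A i j * y i * y j) := by
  set Y : Set (Fin n → ℝ) := {y | (∑ i, y i = 0) ∧ (∑ i, y i ^ 2 = 1)} with hY
  have hYne : Y.Nonempty := by
    obtain ⟨y, h1, h2⟩ := exists_unit_meanzero (n := n) hn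
    exact ⟨y, h1, h2⟩
  have hclosed : IsClosed Y := by
    have c1 : Continuous fun y : Fin n → ℝ => ∑ i, y i :=
      continuous_finset_sum _ fun i _ => continuous_apply i
    have c2 : Continuous fun y : Fin n → ℝ => ∑ i, y i ^ 2 :=
      continuous_finset_sum _ fun i _ => (continuous_apply i).pow 2
    exact (isClosed_eq c1 continuous_const).inter (isClosed_eq c2 continuous_const)
  have hsub : Y ⊆ Set.pi Set.univ fun _ : Fin n => Set.Icc (-1:ℝ) 1 := by
    intro y hy i _
    have hle : y i ^ 2 ≤ 1 := by
      rw [← hy.2]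
      exact Finset.single_le_sum (f := fun i => y i ^ 2) (fun j _ => sq_nonneg _)
        (Finset.mem_univ i)
    constructor
    · nlinarith
    · nlinarith
  have hcomp : IsCompact Y :=
    IsCompact.of_isClosed_subset (isCompact_univ_pi fun _ => isCompact_Icc) hclosed hsub
  have hcont : Continuous fun y : Fin n → ℝ => ∑ i, ∑ j, A i j * y i * y j :=
    continuous_finset_sum _ fun i _ => continuous_finset_sum _ fun j _ =>
      ((continuous_const.mul (continuous_apply i)).mul (continuous_apply j))
  obtain ⟨y, hyY, hymax⟩ := hcomp.exists_isMaxOn hYne hcont.continuousOn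
  refine ⟨y, hyY.1, hyY.2, ?_, ?_⟩
  · have hgreatest : IsGreatest {t : ℝ | ∃ x : Fin n → ℝ, (∑ i, x i = 0) ∧
        (∑ i, x i ^ 2 = 1) ∧ t = ∑ i, ∑ j, A i j * x i * x j}
        (∑ i, ∑ j, A i j * y i * y j) := by
      constructor
      · exact ⟨y, hyY.1, hyY.2, rfl⟩
      · rintro t ⟨z, hz0, hz1, rfl⟩
        exact hymax (⟨hz0, hz1⟩ : z ∈ Y)
    exact hgreatest.csSup_eq
  · intro z hz0 hz1
    exact hymax (⟨hz0, hz1⟩ : z ∈ Y)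

/-! ### The compact convex set of normalized negative-type matrices -/

/-- The set of symmetric, zero-diagonal, negative-type arrays with total sum `T`. -/
def CC (n : ℕ) (T : ℝ) : Set ((Fin n × Fin n) → ℝ) :=
  {Φ | (∀ i j : Fin n, Φ (i,j) = Φ (j,i)) ∧ (∀ i : Fin n, Φ (i,i) = 0) ∧
    (∑ p, Φ p = T) ∧
    ∀ c : Fin n → ℝ, (∑ i, c i = 0) → ∑ i, ∑ j, c i * c j * Φ (i,j) ≤ 0}

lemma CC_convex (T : ℝ) : Convex ℝ (CC n T) := by
  rintro Φ ⟨hs1, hd1, ht1, hn1⟩ Ψ ⟨hs2, hd2, ht2, hn2⟩ a b ha hb hab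
  refine ⟨?_, ?_, ?_, ?_⟩
  · intro i j
    simp only [Pi.add_apply, Pi.smul_apply, smul_eq_mul]
    rw [hs1 i j, hs2 i j]
  · intro i
    simp only [Pi.add_apply, Pi.smul_apply, smul_eq_mul]
    rw [hd1 i, hd2 i]; ring
  · simp only [Pi.add_apply, Pi.smul_apply, smul_eq_mul]
    rw [Finset.sum_add_distrib, ← Finset.mul_sum, ← Finset.mul_sum, ht1, ht2,
      ← add_mul, hab, one_mul]
  · intro c hc
    have e : ∀ i j : Fin n, c i * c j * (a • Φ + b • Ψ) (i,j)
        = a * (c i * c j * Φ (i,j)) + b * (c i * c j * Ψ (i,j)) := by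
      intro i j
      simp only [Pi.add_apply, Pi.smul_apply, smul_eq_mul]
      ring
    rw [Finset.sum_congr rfl fun i _ => Finset.sum_congr rfl fun j _ => e i j]
    have split : ∑ i : Fin n, ∑ j, (a * (c i * c j * Φ (i,j)) + b * (c i * c j * Ψ (i,j)))
        = a * (∑ i, ∑ j, c i * c j * Φ (i,j)) + b * ∑ i, ∑ j, c i * c j * Ψ (i,j) := by
      rw [Finset.sum_congr rfl fun i _ => Finset.sum_add_distrib, Finset.sum_add_distrib]
      congr 1
      · rw [Finset.mul_sum]
        exact Finset.sum_congr rfl fun i _ => by rw [Finset.mul_sum]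
      · rw [Finset.mul_sum]
        exact Finset.sum_congr rfl fun i _ => by rw [Finset.mul_sum]
    rw [split]
    have h1 := hn1 c hc
    have h2 := hn2 c hc
    nlinarith

lemma CC_closed (T : ℝ) : IsClosed (CC n T) := by
  have h1 : IsClosed {Φ : (Fin n × Fin n) → ℝ | ∀ i j : Fin n, Φ (i,j) = Φ (j,i)} := by
    have : {Φ : (Fin n × Fin n) → ℝ | ∀ i j : Fin n, Φ (i,j) = Φ (j,i)}
        = ⋂ i, ⋂ j, {Φ | Φ (i,j) = Φ (j,i)} := by
      ext Φ; simp [Set.mem_iInter]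
    rw [this]
    exact isClosed_iInter fun i => isClosed_iInter fun j =>
      isClosed_eq (continuous_apply _) (continuous_apply _)
  have h2 : IsClosed {Φ : (Fin n × Fin n) → ℝ | ∀ i : Fin n, Φ (i,i) = 0} := by
    have : {Φ : (Fin n × Fin n) → ℝ | ∀ i : Fin n, Φ (i,i) = 0}
        = ⋂ i, {Φ | Φ (i,i) = 0} := by
      ext Φ; simp [Set.mem_iInter]
    rw [this]
    exact isClosed_iInter fun i => isClosed_eq (continuous_apply _) continuous_const
  have h3 : IsClosed {Φ : (Fin n × Fin n) → ℝ | ∑ p, Φ p = T} :=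
    isClosed_eq (continuous_finset_sum _ fun p _ => continuous_apply p) continuous_const
  have h4 : IsClosed {Φ : (Fin n × Fin n) → ℝ |
      ∀ c : Fin n → ℝ, (∑ i, c i = 0) → ∑ i, ∑ j, c i * c j * Φ (i,j) ≤ 0} := by
    have : {Φ : (Fin n × Fin n) → ℝ |
        ∀ c : Fin n → ℝ, (∑ i, c i = 0) → ∑ i, ∑ j, c i * c j * Φ (i,j) ≤ 0}
        = ⋂ c : {c : Fin n → ℝ // ∑ i, c i = 0},
          {Φ | ∑ i, ∑ j, (c:Fin n → ℝ) i * (c:Fin n → ℝ) j * Φ (i,j) ≤ 0} := by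
      ext Φ
      simp only [Set.mem_iInter, Set.mem_setOf_eq, Subtype.forall]
    rw [this]
    refine isClosed_iInter fun c => isClosed_le ?_ continuous_const
    exact continuous_finset_sum _ fun i _ => continuous_finset_sum _ fun j _ =>
      continuous_const.mul (continuous_apply _)
  have : CC n T = _ ∩ (_ ∩ (_ ∩ _)) := rfl
  exact (h1.inter (h2.inter (h3.inter h4)) : _)

lemma CC_entry_nonneg {T : ℝ} {Φ : (Fin n × Fin n) → ℝ} (hΦ : Φ ∈ CC n T)
    (p : Fin n × Fin n) : 0 ≤ Φ p := by
  obtain ⟨hsym, hdiag, htot, hneg⟩ := hΦ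
  obtain ⟨i, j⟩ := p
  rcases eq_or_ne i j with rfl | hne
  · rw [hdiag i]
  · set c : Fin n → ℝ := fun k => if k = i then 1 else if k = j then (-1) else 0 with hc
    have hc0 : ∑ k, c k = 0 := by
      simp only [hc]
      rw [show (∑ k : Fin n, if k = i then (1:ℝ) else if k = j then -1 else 0)
          = ∑ k, (if k = i then (1:ℝ) else if k = j then -1 else 0) * 1 by simp,
        sum_cvec_mul hne 1 (-1) (fun _ => (1:ℝ))]
      ring
    have hkey := hneg c hc0
    have hexp : ∑ k, ∑ l, c k * c l * Φ (k,l) = -2 * Φ (i,j) := by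
      have inner : ∀ k, ∑ l, c k * c l * Φ (k,l) = c k * (Φ (k,i) - Φ (k,j)) := by
        intro k
        have e : ∀ l, c k * c l * Φ (k,l) = c k * (c l * Φ (k,l)) := fun l => by ring
        rw [Finset.sum_congr rfl fun l _ => e l, ← Finset.mul_sum, hc]
        congr 1
        have := sum_cvec_mul hne (1:ℝ) (-1) (fun l => Φ (k,l))
        simp only [one_mul, neg_one_mul] at this ⊢
        rw [this]; ring
      rw [Finset.sum_congr rfl fun k _ => inner k, hc]
      rw [sum_cvec_mul hne (1:ℝ) (-1) (fun k => Φ (k,i) - Φ (k,j))]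
      rw [hdiag i, hdiag j, hsym j i]
      ring
    rw [hexp] at hkey
    linarith

lemma CC_compact {T : ℝ} (hT : 0 ≤ T) : IsCompact (CC n T) := by
  refine IsCompact.of_isClosed_subset
    (isCompact_univ_pi fun _ : Fin n × Fin n => isCompact_Icc (a := (0:ℝ)) (b := T))
    (CC_closed T) ?_
  intro Φ hΦ p _
  refine ⟨CC_entry_nonneg hΦ p, ?_⟩
  rw [← hΦ.2.2.1]
  exact Finset.single_le_sum (f := fun q => Φ q) (fun q _ => CC_entry_nonneg hΦ q)
    (Finset.mem_univ p)

/-- Membership of the scaled squared-difference array in `CC`. -/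
lemma memCC_of_y {T : ℝ} (hT : 0 ≤ T) (hn : 0 < n) (y : Fin n → ℝ)
    (hy0 : ∑ i, y i = 0) (hy1 : ∑ i, y i ^ 2 = 1) :
    (fun p : Fin n × Fin n => T / (2 * n) * (y p.1 - y p.2) ^ 2) ∈ CC n T := by
  have hn' : (0:ℝ) < (n:ℝ) := by exact_mod_cast hn
  have ht0 : 0 ≤ T / (2 * n) := by positivity
  refine ⟨fun i j => by ring_nf, fun i => by simp, ?_, ?_⟩
  · rw [Fintype.sum_prod_type]
    have : ∀ i : Fin n, ∑ j, T / (2 * (n:ℝ)) * (y i - y j) ^ 2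
        = T / (2 * n) * ∑ j, (y i - y j) ^ 2 := fun i => by rw [Finset.mul_sum]
    rw [Finset.sum_congr rfl fun i _ => this i, ← Finset.mul_sum, sum_sum_sub_sq, hy0, hy1]
    field_simp
    ring
  · intro c hc
    have e : ∀ i j : Fin n, c i * c j * (T / (2 * (n:ℝ)) * (y i - y j) ^ 2)
        = T / (2 * n) * (c i * c j * (y i - y j) ^ 2) := fun i j => by ring
    rw [Finset.sum_congr rfl fun i _ => Finset.sum_congr rfl fun j _ => e i j]
    have pull : ∑ i : Fin n, ∑ j, T / (2 * (n:ℝ)) * (c i * c j * (y i - y j) ^ 2)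
        = T / (2*n) * ∑ i, ∑ j, c i * c j * (y i - y j) ^ 2 := by
      rw [Finset.mul_sum]
      exact Finset.sum_congr rfl fun i _ => by rw [Finset.mul_sum]
    rw [pull, sum_sum_mul_sub_sq, hc]
    have : 2 * (0:ℝ) * (∑ i, c i * y i ^ 2) - 2 * (∑ i, c i * y i) ^ 2
        = -(2 * (∑ i, c i * y i) ^ 2) := by ring
    rw [this]
    have h2 : 0 ≤ 2 * (∑ i, c i * y i) ^ 2 := by positivity
    nlinarith

/-! ### The separation argument -/

/-- pairing between a matrix and an array. -/
def pairE (A : Matrix (Fin n) (Fin n) ℝ) (Ψ : (Fin n × Fin n) → ℝ) : ℝ :=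
  ∑ p : Fin n × Fin n, A p.1 p.2 * Ψ p

lemma pairE_linear (A : Matrix (Fin n) (Fin n) ℝ) (a b : ℝ) (Φ Ψ : (Fin n × Fin n) → ℝ) :
    pairE A (a • Φ + b • Ψ) = a * pairE A Φ + b * pairE A Ψ := by
  rw [pairE, pairE, pairE, Finset.mul_sum, Finset.mul_sum, ← Finset.sum_add_distrib]
  refine Finset.sum_congr rfl fun p _ => ?_
  simp only [Pi.add_apply, Pi.smul_apply, smul_eq_mul]
  ring

lemma pairE_smul (A : Matrix (Fin n) (Fin n) ℝ) (t : ℝ) (Ψ : (Fin n × Fin n) → ℝ) :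
    pairE A (t • Ψ) = t * pairE A Ψ := by
  have := pairE_linear A t 0 Ψ Ψ
  simpa using this

lemma pairE_nonneg {A : Matrix (Fin n) (Fin n) ℝ} (hA : ∀ i j, 0 ≤ A i j)
    {Ψ : (Fin n × Fin n) → ℝ} (hΨ : ∀ p, 0 ≤ Ψ p) : 0 ≤ pairE A Ψ :=
  Finset.sum_nonneg fun p _ => mul_nonneg (hA p.1 p.2) (hΨ p)

lemma pairE_continuous (A : Matrix (Fin n) (Fin n) ℝ) : Continuous (pairE A) :=
  continuous_finset_sum _ fun p _ => continuous_const.mul (continuous_apply p)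

/-- representation of continuous linear functionals on the finite pi space. -/
lemma clm_repr (ℓ : ((Fin n × Fin n) → ℝ) →L[ℝ] ℝ) (Ψ : (Fin n × Fin n) → ℝ) :
    ℓ Ψ = ∑ p : Fin n × Fin n, Ψ p * ℓ (fun q => if p = q then 1 else 0) := by
  conv_lhs => rw [pi_eq_sum_univ Ψ, map_sum]
  exact Finset.sum_congr rfl fun p _ => by rw [map_smul, smul_eq_mul]

/-- The closed cone generated by symmetric stochastic matrices. -/
def CS (n : ℕ) : Set ((Fin n × Fin n) → ℝ) :=
  {M | (∀ i j : Fin n, M (i,j) = M (j,i)) ∧ (∀ p, 0 ≤ M p) ∧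
    ∀ i i' : Fin n, ∑ j, M (i,j) = ∑ j, M (i',j)}

lemma CS_zero : (0 : (Fin n × Fin n) → ℝ) ∈ CS n :=
  ⟨fun _ _ => rfl, fun _ => le_refl _, fun _ _ => rfl⟩

lemma CS_convex : Convex ℝ (CS n) := by
  rintro M ⟨hs1, hp1, hr1⟩ M' ⟨hs2, hp2, hr2⟩ a b ha hb _
  refine ⟨?_, ?_, ?_⟩
  · intro i j
    simp only [Pi.add_apply, Pi.smul_apply, smul_eq_mul]
    rw [hs1 i j, hs2 i j]
  · intro p
    simp only [Pi.add_apply, Pi.smul_apply, smul_eq_mul]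
    have := hp1 p; have := hp2 p
    positivity
  · intro i i'
    simp only [Pi.add_apply, Pi.smul_apply, smul_eq_mul]
    rw [Finset.sum_add_distrib, Finset.sum_add_distrib, ← Finset.mul_sum, ← Finset.mul_sum,
      ← Finset.mul_sum, ← Finset.mul_sum, hr1 i i', hr2 i i']

lemma CS_closed : IsClosed (CS n) := by
  have h1 : IsClosed {M : (Fin n × Fin n) → ℝ | ∀ i j : Fin n, M (i,j) = M (j,i)} := by
    have : {M : (Fin n × Fin n) → ℝ | ∀ i j : Fin n, M (i,j) = M (j,i)}
        = ⋂ i, ⋂ j, {M | M (i,j) = M (j,i)} := by ext M; simp [Set.mem_iInter]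
    rw [this]
    exact isClosed_iInter fun i => isClosed_iInter fun j =>
      isClosed_eq (continuous_apply _) (continuous_apply _)
  have h2 : IsClosed {M : (Fin n × Fin n) → ℝ | ∀ p, 0 ≤ M p} := by
    have : {M : (Fin n × Fin n) → ℝ | ∀ p, 0 ≤ M p} = ⋂ p, {M | 0 ≤ M p} := by
      ext M; simp [Set.mem_iInter]
    rw [this]
    exact isClosed_iInter fun p => isClosed_le continuous_const (continuous_apply _)
  have h3 : IsClosed {M : (Fin n × Fin n) → ℝ |
      ∀ i i' : Fin n, ∑ j, M (i,j) = ∑ j, M (i',j)} := by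
    have : {M : (Fin n × Fin n) → ℝ | ∀ i i' : Fin n, ∑ j, M (i,j) = ∑ j, M (i',j)}
        = ⋂ i, ⋂ i', {M | ∑ j, M (i,j) = ∑ j, M (i',j)} := by ext M; simp [Set.mem_iInter]
    rw [this]
    exact isClosed_iInter fun i => isClosed_iInter fun i' =>
      isClosed_eq (continuous_finset_sum _ fun j _ => continuous_apply _)
        (continuous_finset_sum _ fun j _ => continuous_apply _)
  exact (h1.inter (h2.inter h3) : _)

lemma CS_smul {t : ℝ} (ht : 0 ≤ t) {M : (Fin n × Fin n) → ℝ} (hM : M ∈ CS n) :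
    t • M ∈ CS n := by
  obtain ⟨hs, hp, hr⟩ := hM
  refine ⟨?_, ?_, ?_⟩
  · intro i j
    simp only [Pi.smul_apply, smul_eq_mul]
    rw [hs i j]
  · intro p
    simp only [Pi.smul_apply, smul_eq_mul]
    exact mul_nonneg ht (hp p)
  · intro i i'
    simp only [Pi.smul_apply, smul_eq_mul]
    rw [← Finset.mul_sum, ← Finset.mul_sum, hr i i']

lemma CS_of_stoch {A : Matrix (Fin n) (Fin n) ℝ} (hA : IsSymmStochastic A) :
    (fun p : Fin n × Fin n => A p.1 p.2) ∈ CS n := by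
  refine ⟨fun i j => hA.1 i j, fun p => hA.2.1 p.1 p.2, fun i i' => ?_⟩
  simp only
  rw [hA.2.2 i, hA.2.2 i']

lemma CS_decomp (hn : 0 < n) {M : (Fin n × Fin n) → ℝ} (hM : M ∈ CS n) :
    (∀ p, M p = 0) ∨ ∃ (A : Matrix (Fin n) (Fin n) ℝ) (r : ℝ), IsSymmStochastic A ∧ 0 < r ∧
      ∀ p : Fin n × Fin n, M p = r * A p.1 p.2 := by
  obtain ⟨hs, hp, hr⟩ := hM
  set i₀ : Fin n := ⟨0, hn⟩
  set r : ℝ := ∑ j, M (i₀, j) with hrdef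
  have hr0 : 0 ≤ r := Finset.sum_nonneg fun j _ => hp _
  rcases eq_or_lt_of_le hr0 with hz | hpos
  · left
    intro p
    have hrow : ∑ j, M (p.1, j) = 0 := by rw [hr p.1 i₀, ← hrdef, ← hz]
    have := (Finset.sum_eq_zero_iff_of_nonneg (fun j _ => hp (p.1, j))).mp hrow p.2
      (Finset.mem_univ p.2)
    simpa using this
  · right
    refine ⟨fun i j => M (i,j) / r, r, ⟨?_, ?_, ?_⟩, hpos, ?_⟩
    · intro i j
      show M (i,j) / r = M (j,i) / r
      rw [hs i j]
    · intro i j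
      exact div_nonneg (hp _) hr0
    · intro i
      rw [← Finset.sum_div, hr i i₀, ← hrdef, div_self (ne_of_gt hpos)]
    · intro p
      rw [mul_div_cancel₀ _ (ne_of_gt hpos)]

/-- Step B : the minimax/separation argument. -/
lemma stepB {K T : ℝ} (hK : 0 < K) (hT : 0 ≤ T) (hn : 0 < n)
    (w : (Fin n × Fin n) → ℝ) (hw0 : ∀ p, 0 ≤ w p)
    (hCCne : (CC n T).Nonempty)
    (HA : ∀ A : Matrix (Fin n) (Fin n) ℝ, IsSymmStochastic A →
       ∃ Φ ∈ CC n T, pairE A Φ ≤ K * pairE A w) :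
    ∃ Φ ∈ CC n T, ∀ A : Matrix (Fin n) (Fin n) ℝ, IsSymmStochastic A →
       pairE A Φ ≤ K * pairE A w := by
  by_contra hcon
  push_neg at hcon
  set N : Set ((Fin n × Fin n) → ℝ) :=
    {Ψ | ∀ A : Matrix (Fin n) (Fin n) ℝ, IsSymmStochastic A → pairE A Ψ ≤ K * pairE A w}
    with hNdef
  have hdisj : Disjoint (CC n T) N := by
    rw [Set.disjoint_left]
    intro Φ hΦ hΦN
    obtain ⟨A, hA, hlt⟩ := hcon Φ hΦ
    exact absurd (hΦN A hA) (not_le.mpr hlt)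
  have hNconv : Convex ℝ N := by
    rintro Φ hΦ Ψ hΨ a b ha hb hab
    intro A hA
    rw [pairE_linear]
    have h1 := hΦ A hA
    have h2 := hΨ A hA
    have h3 := mul_le_mul_of_nonneg_left h1 ha
    have h4 := mul_le_mul_of_nonneg_left h2 hb
    have h5 : a * (K * pairE A w) + b * (K * pairE A w) = K * pairE A w := by
      rw [← add_mul, hab, one_mul]
    linarith
  have hNclosed : IsClosed N := by
    have : N = ⋂ A : Matrix (Fin n) (Fin n) ℝ,
        {Ψ | IsSymmStochastic A → pairE A Ψ ≤ K * pairE A w} := by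
      ext Ψ; simp only [hNdef, Set.mem_iInter, Set.mem_setOf_eq]
    rw [this]
    refine isClosed_iInter fun A => ?_
    by_cases hA : IsSymmStochastic A
    · have : {Ψ | IsSymmStochastic A → pairE A Ψ ≤ K * pairE A w}
          = {Ψ | pairE A Ψ ≤ K * pairE A w} := by
        ext Ψ; simp [hA]
      rw [this]
      exact isClosed_le (pairE_continuous A) continuous_const
    · have : {Ψ | IsSymmStochastic A → pairE A Ψ ≤ K * pairE A w} = Set.univ := by
        ext Ψ; simp [hA]
      rw [this]
      exact isClosed_univ
  obtain ⟨ℓ, u, v, hCu, huv, hNv⟩ :=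
    geometric_hahn_banach_compact_closed (CC_convex T) (CC_compact hT) hNconv hNclosed hdisj
  have h0N : (0 : (Fin n × Fin n) → ℝ) ∈ N := by
    intro A hA
    have : pairE A (0 : (Fin n × Fin n) → ℝ) = 0 := by
      simp [pairE]
    rw [this]
    exact mul_nonneg hK.le (pairE_nonneg hA.2.1 hw0)
  have hv0 : v < 0 := by
    have := hNv 0 h0N
    rwa [map_zero] at this
  have hWpos : ∀ W : (Fin n × Fin n) → ℝ,
      (∀ A : Matrix (Fin n) (Fin n) ℝ, IsSymmStochastic A → pairE A W ≤ 0) → 0 ≤ ℓ W := by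
    intro W hW
    by_contra hneg
    push_neg at hneg
    set t : ℝ := (v - 1) / ℓ W with htdef
    have ht : 0 < t := div_pos_of_neg_of_neg (by linarith) hneg
    have htW : (t • W) ∈ N := by
      intro A hA
      rw [pairE_smul]
      have h1 : t * pairE A W ≤ 0 := mul_nonpos_of_nonneg_of_nonpos ht.le (hW A hA)
      exact le_trans h1 (mul_nonneg hK.le (pairE_nonneg hA.2.1 hw0))
    have hv' := hNv (t • W) htW
    rw [map_smul, smul_eq_mul, htdef, div_mul_cancel₀ _ (ne_of_lt hneg)] at hv'
    linarith
  set B : (Fin n × Fin n) → ℝ := fun p => ℓ (fun q => if p = q then 1 else 0) with hBdef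
  have hBCS : (-B) ∈ CS n := by
    by_contra hB
    obtain ⟨g, u', hCSu', hgB⟩ :=
      geometric_hahn_banach_closed_point (CS_convex (n := n)) (CS_closed (n := n)) hB
    have hg0 : (0:ℝ) < u' := by
      have := hCSu' 0 CS_zero
      rwa [map_zero] at this
    have hgle : ∀ M ∈ CS n, g M ≤ 0 := by
      intro M hM
      by_contra hposg
      push_neg at hposg
      have hscale := hCSu' _ (CS_smul (div_nonneg (by linarith : (0:ℝ) ≤ u' + 1) hposg.le) hM)
      rw [map_smul, smul_eq_mul, div_mul_cancel₀ _ (ne_of_gt hposg)] at hscale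
      linarith
    set Wg : (Fin n × Fin n) → ℝ := fun p => g (fun q => if p = q then 1 else 0) with hWgdef
    have hWg : ∀ A : Matrix (Fin n) (Fin n) ℝ, IsSymmStochastic A → pairE A Wg ≤ 0 := by
      intro A hA
      have hACS := hgle _ (CS_of_stoch hA)
      rw [clm_repr g (fun p : Fin n × Fin n => A p.1 p.2)] at hACS
      rw [pairE]
      refine le_trans (le_of_eq (Finset.sum_congr rfl fun p _ => ?_)) hACS
      simp only [hWgdef]
    have h1 : 0 ≤ ℓ Wg := hWpos Wg hWg
    have h2 : g (-B) = - ℓ Wg := by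
      rw [clm_repr g (-B), clm_repr ℓ Wg, ← Finset.sum_neg_distrib]
      refine Finset.sum_congr rfl fun p _ => ?_
      simp only [Pi.neg_apply, hBdef, hWgdef]
      ring
    linarith [hgB, h2, h1, hg0]
  rcases CS_decomp hn hBCS with hzero | ⟨A₀, r, hA₀, hr, hrB⟩
  · have hl0 : ∀ Ψ, ℓ Ψ = 0 := by
      intro Ψ
      rw [clm_repr ℓ Ψ]
      refine Finset.sum_eq_zero fun p _ => ?_
      have hBp : B p = 0 := by
        have := hzero p
        simp only [Pi.neg_apply, neg_eq_zero] at this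
        exact this
      show Ψ p * B p = 0
      rw [hBp, mul_zero]
    obtain ⟨Φ₀, hΦ₀⟩ := hCCne
    have hu := hCu Φ₀ hΦ₀
    rw [hl0] at hu
    linarith
  · obtain ⟨Φ, hΦCC, hineq⟩ := HA A₀ hA₀
    have hKw : (fun p : Fin n × Fin n => K * w p) ∈ N := by
      intro A hA
      have : pairE A (fun p => K * w p) = K * pairE A w := by
        rw [pairE, pairE, Finset.mul_sum]
        exact Finset.sum_congr rfl fun p _ => by ring
      rw [this]
    have hrepr : ∀ Ψ, ℓ Ψ = -r * pairE A₀ Ψ := by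
      intro Ψ
      rw [clm_repr ℓ Ψ, pairE, Finset.mul_sum]
      refine Finset.sum_congr rfl fun p _ => ?_
      have hBp : B p = -(r * A₀ p.1 p.2) := by
        have := hrB p
        simp only [Pi.neg_apply] at this
        linarith
      show Ψ p * B p = -r * (A₀ p.1 p.2 * Ψ p)
      rw [hBp]
      ring
    have h1 := hNv _ hKw
    have h2 := hCu Φ hΦCC
    rw [hrepr] at h1 h2
    have hKpair : pairE A₀ (fun p => K * w p) = K * pairE A₀ w := by
      rw [pairE, pairE, Finset.mul_sum]
      exact Finset.sum_congr rfl fun p _ => by ring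
    rw [hKpair] at h1
    nlinarith [mul_le_mul_of_nonneg_left hineq hr.le]

/-! ### Step C : entrywise bounds from testing against swap matrices -/

lemma sum_swap_diag {i₀ j₀ : Fin n} (hne : i₀ ≠ j₀) (Ψ : (Fin n × Fin n) → ℝ) :
    ∑ i, Ψ (i, Equiv.swap i₀ j₀ i)
      = (∑ i, Ψ (i,i)) + (Ψ (i₀,j₀) - Ψ (i₀,i₀)) + (Ψ (j₀,i₀) - Ψ (j₀,j₀)) := by
  have e : ∀ i, Ψ (i, Equiv.swap i₀ j₀ i) = Ψ (i,i) +
      (if i = i₀ then Ψ (i₀,j₀) - Ψ (i₀,i₀) else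
        if i = j₀ then Ψ (j₀,i₀) - Ψ (j₀,j₀) else 0) * 1 := by
    intro i
    rcases eq_or_ne i i₀ with rfl | h0
    · rw [if_pos rfl, Equiv.swap_apply_left]
      ring
    rcases eq_or_ne i j₀ with rfl | h1
    · rw [if_neg h0, if_pos rfl, Equiv.swap_apply_right]
      ring
    · rw [if_neg h0, if_neg h1, Equiv.swap_apply_of_ne_of_ne h0 h1]
      ring
  rw [Finset.sum_congr rfl fun i _ => e i, Finset.sum_add_distrib,
    sum_cvec_mul hne (Ψ (i₀,j₀) - Ψ (i₀,i₀)) (Ψ (j₀,i₀) - Ψ (j₀,j₀)) (fun _ => (1:ℝ))]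
  ring

lemma swap_matrix_symmstoch {i₀ j₀ : Fin n} (hne : i₀ ≠ j₀) :
    IsSymmStochastic (fun i j : Fin n =>
      ((if i = j then (1:ℝ) else 0) + (if j = Equiv.swap i₀ j₀ i then 1 else 0)) / 2) := by
  set σ := Equiv.swap i₀ j₀ with hσ
  have hinv : ∀ i j : Fin n, (j = σ i) ↔ (i = σ j) := by
    intro i j
    constructor <;> (rintro rfl; rw [Equiv.swap_apply_self])
  refine ⟨?_, ?_, ?_⟩
  · intro i j
    have e1 : (if i = j then (1:ℝ) else 0) = (if j = i then (1:ℝ) else 0) := by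
      simp only [eq_comm]
    have e2 : (if j = σ i then (1:ℝ) else 0) = (if i = σ j then (1:ℝ) else 0) := by
      rw [if_congr (hinv i j) rfl rfl]
    show ((if i = j then (1:ℝ) else 0) + (if j = σ i then 1 else 0)) / 2
        = ((if j = i then (1:ℝ) else 0) + (if i = σ j then 1 else 0)) / 2
    rw [e1, e2]
  · intro i j
    have h1 : (0:ℝ) ≤ if i = j then (1:ℝ) else 0 := by split <;> norm_num
    have h2 : (0:ℝ) ≤ if j = σ i then (1:ℝ) else 0 := by split <;> norm_num
    linarith
  · intro i
    have e : ∀ j : Fin n, ((if i = j then (1:ℝ) else 0) + (if j = σ i then 1 else 0)) / 2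
        = (if j = i then (1:ℝ)/2 else 0) + (if j = σ i then (1:ℝ)/2 else 0) := by
      intro j
      rcases eq_or_ne i j with rfl | h0
      · rw [if_pos rfl, if_pos rfl]
        split <;> norm_num
      · rw [if_neg h0, if_neg (Ne.symm h0)]
        split <;> norm_num
    rw [Finset.sum_congr rfl fun j _ => e j, Finset.sum_add_distrib,
      Finset.sum_ite_eq' Finset.univ i fun _ => (1:ℝ)/2,
      Finset.sum_ite_eq' Finset.univ (σ i) fun _ => (1:ℝ)/2]
    norm_num

lemma pairE_swap {i₀ j₀ : Fin n} (hne : i₀ ≠ j₀) (Ψ : (Fin n × Fin n) → ℝ) :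
    pairE (fun i j : Fin n =>
        ((if i = j then (1:ℝ) else 0) + (if j = Equiv.swap i₀ j₀ i then 1 else 0)) / 2) Ψ
      = (∑ i, Ψ (i,i)) / 2 + (∑ i, Ψ (i, Equiv.swap i₀ j₀ i)) / 2 := by
  set σ := Equiv.swap i₀ j₀ with hσ
  unfold pairE; rw [Fintype.sum_prod_type]
  have inner : ∀ i : Fin n, ∑ j,
      (((if i = j then (1:ℝ) else 0) + (if j = σ i then 1 else 0)) / 2) * Ψ (i,j)
      = Ψ (i,i) / 2 + Ψ (i, σ i) / 2 := by
    intro i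
    have e : ∀ j : Fin n,
        (((if i = j then (1:ℝ) else 0) + (if j = σ i then 1 else 0)) / 2) * Ψ (i,j)
        = (if j = i then Ψ (i,j) / 2 else 0) + (if j = σ i then Ψ (i,j) / 2 else 0) := by
      intro j
      rcases eq_or_ne i j with rfl | h0
      · rw [if_pos rfl, if_pos rfl]
        split <;> norm_num <;> ring
      · rw [if_neg h0, if_neg (Ne.symm h0), zero_add, zero_add]
        split <;> norm_num <;> ring
    rw [Finset.sum_congr rfl fun j _ => e j, Finset.sum_add_distrib,
      Finset.sum_ite_eq' Finset.univ i fun j => Ψ (i,j) / 2,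
      Finset.sum_ite_eq' Finset.univ (σ i) fun j => Ψ (i,j) / 2]
    simp
  rw [Finset.sum_congr rfl fun i _ => inner i, Finset.sum_add_distrib,
    ← Finset.sum_div, ← Finset.sum_div]

lemma stepC {K : ℝ} {Φ w : (Fin n × Fin n) → ℝ}
    (hΦsym : ∀ i j : Fin n, Φ (i,j) = Φ (j,i)) (hΦdiag : ∀ i : Fin n, Φ (i,i) = 0)
    (hwsym : ∀ i j : Fin n, w (i,j) = w (j,i)) (hwdiag : ∀ i : Fin n, w (i,i) = 0)
    (hN : ∀ A : Matrix (Fin n) (Fin n) ℝ, IsSymmStochastic A → pairE A Φ ≤ K * pairE A w) :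
    ∀ p : Fin n × Fin n, Φ p ≤ K * w p := by
  rintro ⟨i₀, j₀⟩
  rcases eq_or_ne i₀ j₀ with rfl | hne
  · rw [hΦdiag, hwdiag, mul_zero]
  have hkey := hN _ (swap_matrix_symmstoch hne)
  rw [pairE_swap hne Φ, pairE_swap hne w,
    sum_swap_diag hne Φ, sum_swap_diag hne w] at hkey
  have hz1 : ∑ i, Φ (i,i) = 0 := Finset.sum_eq_zero fun i _ => hΦdiag i
  have hz2 : ∑ i, w (i,i) = 0 := Finset.sum_eq_zero fun i _ => hwdiag i
  rw [hz1, hz2, hΦdiag, hΦdiag, hwdiag, hwdiag, hΦsym j₀ i₀, hwsym j₀ i₀] at hkey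
  -- hkey : 0/2 + (0 + (Φ(i₀,j₀) - 0) + (Φ(i₀,j₀) - 0))/2 ≤ K * (...)
  have hkey' : Φ (i₀,j₀) ≤ K * w (i₀,j₀) := by nlinarith [hkey]
  exact hkey'

/-! ### Step D : realization of negative-type arrays as squared distances in ℓ₂ -/

lemma lp_single_sub (m : ℕ) (a b : ℝ) :
    lp.single (E := fun _ : ℕ => ℝ) 2 m (a - b) = lp.single 2 m a - lp.single 2 m b := by
  apply lp.ext
  funext k
  rw [lp.coeFn_sub, Pi.sub_apply]
  rcases eq_or_ne k m with rfl | h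
  · rw [lp.single_apply_self, lp.single_apply_self, lp.single_apply_self]
  · rw [lp.single_apply_ne _ _ _ h, lp.single_apply_ne _ _ _ h, lp.single_apply_ne _ _ _ h,
      sub_zero]

lemma stepD (hn : 0 < n) {Φ : (Fin n × Fin n) → ℝ}
    (hsym : ∀ i j : Fin n, Φ (i,j) = Φ (j,i)) (hdiag : ∀ i : Fin n, Φ (i,i) = 0)
    (hneg : ∀ c : Fin n → ℝ, (∑ i, c i = 0) → ∑ i, ∑ j, c i * c j * Φ (i,j) ≤ 0) :
    ∃ f : Fin n → lp (fun _ : ℕ => ℝ) 2, ∀ i j : Fin n, ‖f i - f j‖ ^ 2 = Φ (i,j) := by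
  set i₀ : Fin n := ⟨0, hn⟩
  set G : Matrix (Fin n) (Fin n) ℝ :=
    Matrix.of fun i j => (Φ (i,i₀) + Φ (j,i₀) - Φ (i,j)) / 2 with hG
  have hGapp : ∀ i j, G i j = (Φ (i,i₀) + Φ (j,i₀) - Φ (i,j)) / 2 := fun i j => rfl
  have hPSD : G.PosSemidef := by
    rw [Matrix.posSemidef_iff_dotProduct_mulVec]
    constructor
    · show G.conjTranspose = G
      apply Matrix.ext
      intro i j
      rw [Matrix.conjTranspose_apply, star_trivial, hGapp, hGapp, hsym j i]
      ring
    · intro c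
      have hstar : star c = c := funext fun i => star_trivial _
      rw [hstar]
      have hdot : dotProduct c (G.mulVec c) = ∑ i, c i * ∑ j, G i j * c j := by
        rw [dotProduct]
        exact Finset.sum_congr rfl fun i _ => rfl
      rw [hdot]
      set s : ℝ := ∑ i, c i with hs
      set t : ℝ := ∑ i, c i * Φ (i,i₀) with ht
      set SΦ : ℝ := ∑ i, ∑ j, c i * c j * Φ (i,j) with hSΦ
      have key1 : ∑ i, c i * ∑ j, G i j * c j = s * t - SΦ / 2 := by
        have inner : ∀ i, ∑ j, G i j * c j
            = Φ (i,i₀) * s / 2 + t / 2 - (∑ j, c j * Φ (i,j)) / 2 := by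
          intro i
          have e : ∀ j, G i j * c j
              = Φ (i,i₀) * c j / 2 + (c j * Φ (j,i₀)) / 2 - (c j * Φ (i,j)) / 2 := by
            intro j
            rw [hGapp]
            ring
          rw [Finset.sum_congr rfl fun j _ => e j, Finset.sum_sub_distrib,
            Finset.sum_add_distrib, ← Finset.sum_div, ← Finset.mul_sum, ← Finset.sum_div,
            ← Finset.sum_div]
        rw [Finset.sum_congr rfl fun i (_ : i ∈ Finset.univ) => by rw [inner i]]
        have e2 : ∀ i, c i * (Φ (i,i₀) * s / 2 + t / 2 - (∑ j, c j * Φ (i,j)) / 2)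
            = (c i * Φ (i,i₀)) * s / 2 + c i * t / 2 - (∑ j, c i * (c j * Φ (i,j))) / 2 := by
          intro i
          rw [← Finset.mul_sum]
          ring
        rw [Finset.sum_congr rfl fun i _ => e2 i, Finset.sum_sub_distrib,
          Finset.sum_add_distrib, ← Finset.sum_div, ← Finset.sum_mul, ← Finset.sum_div,
          ← Finset.sum_mul, ← Finset.sum_div]
        have e3 : ∑ i, ∑ j, c i * (c j * Φ (i,j)) = SΦ := by
          rw [hSΦ]
          exact Finset.sum_congr rfl fun i _ => Finset.sum_congr rfl fun j _ => by ring
        rw [e3, ← ht, ← hs]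
        ring
      have key2 : SΦ - 2 * s * t ≤ 0 := by
        set c' : Fin n → ℝ := fun k => c k - s * (if k = i₀ then 1 else 0) with hc'
        have hc'0 : ∑ k, c' k = 0 := by
          rw [hc']
          rw [Finset.sum_sub_distrib, ← Finset.mul_sum]
          have : ∑ k : Fin n, (if k = i₀ then (1:ℝ) else 0) = 1 := by
            rw [Finset.sum_ite_eq' Finset.univ i₀ fun _ => (1:ℝ)]
            simp
          rw [this, ← hs, mul_one, sub_self]
        have hexp : ∑ i, ∑ j, c' i * c' j * Φ (i,j) = SΦ - 2 * s * t := by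
          have inner : ∀ i, ∑ j, c' i * c' j * Φ (i,j)
              = c' i * (∑ j, c j * Φ (i,j)) - (c' i * s) * Φ (i,i₀) := by
            intro i
            have e : ∀ j, c' i * c' j * Φ (i,j)
                = c' i * (c j * Φ (i,j))
                  - (c' i * s) * ((if j = i₀ then (1:ℝ) else 0) * Φ (i,j)) := by
              intro j
              rw [hc']
              ring
            rw [Finset.sum_congr rfl fun j _ => e j, Finset.sum_sub_distrib,
              ← Finset.mul_sum, ← Finset.mul_sum,
              sum_delta_mul i₀ (1:ℝ) (fun j => Φ (i,j))]
            rw [one_mul]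
          rw [Finset.sum_congr rfl fun i _ => inner i, Finset.sum_sub_distrib]
          have part1 : ∑ i, c' i * (∑ j, c j * Φ (i,j)) = SΦ - s * t := by
            have e : ∀ i, c' i * (∑ j, c j * Φ (i,j))
                = c i * (∑ j, c j * Φ (i,j))
                  - s * ((if i = i₀ then (1:ℝ) else 0) * (∑ j, c j * Φ (i,j))) := by
              intro i
              rw [hc']
              ring
            rw [Finset.sum_congr rfl fun i _ => e i, Finset.sum_sub_distrib, ← Finset.mul_sum]
            have h1 : ∑ i, (if i = i₀ then (1:ℝ) else 0) * (∑ j, c j * Φ (i,j))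
                = 1 * ∑ j, c j * Φ (i₀,j) := by
              have := sum_delta_mul i₀ (1:ℝ) (fun i => ∑ j, c j * Φ (i,j))
              rw [this]
            rw [h1, one_mul]
            have h2 : ∑ j, c j * Φ (i₀,j) = t := by
              rw [ht]
              exact Finset.sum_congr rfl fun j _ => by rw [hsym i₀ j]
            rw [h2]
            have h3 : ∑ i, c i * (∑ j, c j * Φ (i,j)) = SΦ := by
              rw [hSΦ]
              refine Finset.sum_congr rfl fun i _ => ?_
              rw [Finset.mul_sum]
              exact Finset.sum_congr rfl fun j _ => by ring
            rw [h3]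
          have part2 : ∑ i, (c' i * s) * Φ (i,i₀) = s * t := by
            have e : ∀ i, (c' i * s) * Φ (i,i₀)
                = s * (c i * Φ (i,i₀)) - s * s * ((if i = i₀ then (1:ℝ) else 0) * Φ (i,i₀)) := by
              intro i
              rw [hc']
              ring
            rw [Finset.sum_congr rfl fun i _ => e i, Finset.sum_sub_distrib, ← Finset.mul_sum,
              ← Finset.mul_sum, sum_delta_mul i₀ (1:ℝ) (fun i => Φ (i,i₀))]
            rw [one_mul, hdiag i₀, mul_zero, sub_zero, ← ht]
          rw [part1, part2]
          ring
        have := hneg c' hc'0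
        rw [hexp] at this
        linarith
      rw [key1]
      linarith
  set sq := (open scoped MatrixOrder in CFC.sqrt G) with hsqdef
  have hmul : sq * sq = G := by
    open scoped MatrixOrder in exact CFC.sqrt_mul_sqrt_self G hPSD.nonneg
  have hherm : sq.IsHermitian := by
    open scoped MatrixOrder in exact (Matrix.nonneg_iff_posSemidef.mp (CFC.sqrt_nonneg G)).1
  have hsymS : ∀ i j, sq i j = sq j i := by
    intro i j
    have h := congrFun (congrFun hherm j) i
    rw [Matrix.conjTranspose_apply, star_trivial] at h
    exact h
  have hGram : ∀ i j, ∑ k, sq i k * sq j k = G i j := by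
    intro i j
    calc ∑ k, sq i k * sq j k = ∑ k, sq i k * sq k j :=
          Finset.sum_congr rfl fun k _ => by rw [hsymS j k]
    _ = (sq * sq) i j := (Matrix.mul_apply).symm
    _ = G i j := by rw [hmul]
  have hdistsq : ∀ i j, ∑ k, (sq i k - sq j k) ^ 2 = Φ (i,j) := by
    intro i j
    have e : ∀ k, (sq i k - sq j k) ^ 2
        = sq i k * sq i k - 2 * (sq i k * sq j k) + sq j k * sq j k := fun k => by ring
    rw [Finset.sum_congr rfl fun k _ => e k, Finset.sum_add_distrib, Finset.sum_sub_distrib,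
      ← Finset.mul_sum, hGram i i, hGram i j, hGram j j, hGapp, hGapp, hGapp,
      hdiag i, hdiag j]
    ring
  set gf : Fin n → ℕ → ℝ := fun i m => if h : m < n then sq i ⟨m, h⟩ else 0 with hgf
  refine ⟨fun i => ∑ m ∈ Finset.range n, lp.single 2 m (gf i m), fun i j => ?_⟩
  have hdiff : (∑ m ∈ Finset.range n, lp.single 2 m (gf i m))
      - (∑ m ∈ Finset.range n, lp.single 2 m (gf j m))
      = ∑ m ∈ Finset.range n, lp.single 2 m (gf i m - gf j m) := by
    rw [Finset.sum_congr rfl fun m _ => lp_single_sub m (gf i m) (gf j m),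
      Finset.sum_sub_distrib]
  rw [hdiff]
  have hp2 : 0 < (2:ℝ≥0∞).toReal := by norm_num
  have hns := lp.norm_sum_single hp2 (fun m => gf i m - gf j m) (Finset.range n)
  rw [show (2:ℝ≥0∞).toReal = (2:ℝ) by norm_num] at hns
  calc ‖∑ m ∈ Finset.range n, lp.single 2 m (gf i m - gf j m)‖ ^ (2:ℕ)
      = ‖∑ m ∈ Finset.range n, lp.single 2 m (gf i m - gf j m)‖ ^ (2:ℝ) := by
        rw [show (2:ℝ) = ((2:ℕ):ℝ) by norm_num, Real.rpow_natCast]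
    _ = ∑ m ∈ Finset.range n, ‖gf i m - gf j m‖ ^ (2:ℝ) := hns
    _ = ∑ m ∈ Finset.range n, (gf i m - gf j m) ^ 2 :=
        Finset.sum_congr rfl fun m _ => rpow_two_eq_sq _
    _ = ∑ k : Fin n, (gf i (k:ℕ) - gf j (k:ℕ)) ^ 2 :=
        (Fin.sum_univ_eq_sum_range (fun m => (gf i m - gf j m) ^ 2) n).symm
    _ = ∑ k : Fin n, (sq i k - sq j k) ^ 2 := by
        refine Finset.sum_congr rfl fun k _ => ?_
        rw [hgf]
        simp only [Fin.is_lt, dif_pos, Fin.eta]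
    _ = Φ (i,j) := hdistsq i j

/-- Direction (1) → (2). -/
lemma dir_1_to_2 {K : ℝ} (hK : 1 ≤ K) (X : Type*) [MetricSpace X]
    (h1 : ∀ A : Matrix (Fin n) (Fin n) ℝ, IsSymmStochastic A →
        gammaNL A X 2 ≤ ENNReal.ofReal K / ENNReal.ofReal (1 - lambdaTwo A))
    (D : ℝ) (hD : K < D) (x : Fin n → X) :
    ∃ (f : Fin n → lp (fun _ : ℕ => ℝ) 2) (L : ℝ), 0 < L ∧
      (∀ i j, ‖f i - f j‖ ≤ L * dist (x i) (x j)) ∧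
      L ^ 2 / D * ∑ i, ∑ j, dist (x i) (x j) ^ 2 ≤ ∑ i, ∑ j, ‖f i - f j‖ ^ 2 := by
  set T : ℝ := ∑ i, ∑ j, dist (x i) (x j) ^ 2 with hT
  have hT0 : 0 ≤ T := Finset.sum_nonneg fun i _ => Finset.sum_nonneg fun j _ => by positivity
  have hD0 : (0:ℝ) < D := by linarith
  rcases eq_or_lt_of_le hT0 with hTz | hTpos
  · refine ⟨fun _ => 0, 1, one_pos, ?_, ?_⟩
    · intro i j
      rw [sub_self, norm_zero, one_mul]
      exact dist_nonneg
    · rw [← hTz, mul_zero]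
      refine Finset.sum_nonneg fun i _ => Finset.sum_nonneg fun j _ => by positivity
  · have hn2 : 2 ≤ n := by
      by_contra hlt
      push_neg at hlt
      have hsub : ∀ i j : Fin n, i = j := by
        intro i j
        have hi := i.isLt
        have hj := j.isLt
        exact Fin.ext (by omega)
      have : T = 0 := by
        rw [hT]
        refine Finset.sum_eq_zero fun i _ => Finset.sum_eq_zero fun j _ => ?_
        rw [hsub i j, dist_self]
        norm_num
      linarith
    have hn : 0 < n := by omega
    have hn' : (0:ℝ) < (n:ℝ) := by exact_mod_cast hn
    have hKpos : (0:ℝ) < K := by linarith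
    set w : (Fin n × Fin n) → ℝ := fun p => dist (x p.1) (x p.2) ^ 2 with hw
    have hwsym : ∀ i j : Fin n, w (i,j) = w (j,i) := by
      intro i j; simp only [hw]; rw [dist_comm]
    have hwdiag : ∀ i : Fin n, w (i,i) = 0 := by
      intro i; simp only [hw]; rw [dist_self]; norm_num
    have hw0 : ∀ p, 0 ≤ w p := fun p => by positivity
    -- Step A
    have HA : ∀ A : Matrix (Fin n) (Fin n) ℝ, IsSymmStochastic A →
        ∃ Φ ∈ CC n T, pairE A Φ ≤ K * pairE A w := by
      intro A hA
      obtain ⟨y, hy0, hy1, hleq, _⟩ := lambdaTwo_exists_max hA hn2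
      refine ⟨fun p => T / (2*n) * (y p.1 - y p.2) ^ 2, memCC_of_y hT0 hn y hy0 hy1, ?_⟩
      have hb := gamma_real_bound hK hA (h1 A hA) hn x
      have hpair : pairE A (fun p => T / (2*(n:ℝ)) * (y p.1 - y p.2) ^ 2)
          = T / (2*n) * ∑ i, ∑ j, A i j * (y i - y j) ^ 2 := by
        rw [pairE, Fintype.sum_prod_type]
        have e : ∀ i j : Fin n, A i j * (T / (2*(n:ℝ)) * (y i - y j) ^ 2)
            = T / (2*n) * (A i j * (y i - y j) ^ 2) := fun i j => by ring
        rw [Finset.sum_congr rfl fun i _ => Finset.sum_congr rfl fun j _ => e i j,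
          Finset.mul_sum]
        exact Finset.sum_congr rfl fun i _ => by rw [Finset.mul_sum]
      have hray : ∑ i, ∑ j, A i j * (y i - y j) ^ 2 = 2 - 2 * lambdaTwo A := by
        rw [sum_sum_A_sub_sq hA y, hy1, ← hleq]
        norm_num
      have hpw : pairE A w = ∑ i, ∑ j, A i j * dist (x i) (x j) ^ 2 := by
        rw [pairE, Fintype.sum_prod_type]
      rw [hpair, hray, hpw]
      set SA := ∑ i, ∑ j, A i j * dist (x i) (x j) ^ 2 with hSA
      have e2 : T / (2*(n:ℝ)) * (2 - 2 * lambdaTwo A) = (1 - lambdaTwo A) * T / n := by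
        field_simp
      rw [e2, div_le_iff₀ hn']
      calc (1 - lambdaTwo A) * T ≤ K * (n:ℝ) * SA := hb
      _ = K * SA * (n:ℝ) := by ring
    have hCCne : (CC n T).Nonempty := by
      obtain ⟨y, hy0, hy1⟩ := exists_unit_meanzero hn2
      exact ⟨_, memCC_of_y hT0 hn y hy0 hy1⟩
    obtain ⟨Φ, hΦCC, hΦall⟩ := stepB hKpos hT0 hn w hw0 hCCne HA
    obtain ⟨hΦsym, hΦdiag, hΦtot, hΦneg⟩ := hΦCC
    have hent := stepC hΦsym hΦdiag hwsym hwdiag hΦall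
    obtain ⟨f, hf⟩ := stepD hn hΦsym hΦdiag hΦneg
    refine ⟨f, Real.sqrt K, Real.sqrt_pos.mpr hKpos, ?_, ?_⟩
    · intro i j
      have h1' : ‖f i - f j‖ ^ 2 ≤ (Real.sqrt K * dist (x i) (x j)) ^ 2 := by
        rw [hf i j, mul_pow, Real.sq_sqrt hKpos.le]
        exact hent (i,j)
      have hnn : 0 ≤ Real.sqrt K * dist (x i) (x j) := by positivity
      calc ‖f i - f j‖ = Real.sqrt (‖f i - f j‖ ^ 2) := (Real.sqrt_sq (norm_nonneg _)).symm
      _ ≤ Real.sqrt ((Real.sqrt K * dist (x i) (x j)) ^ 2) := Real.sqrt_le_sqrt h1'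
      _ = Real.sqrt K * dist (x i) (x j) := Real.sqrt_sq hnn
    · have hsum : ∑ i, ∑ j, ‖f i - f j‖ ^ 2 = T := by
        rw [Finset.sum_congr rfl fun i (_ : i ∈ Finset.univ) =>
          Finset.sum_congr rfl fun j (_ : j ∈ Finset.univ) => hf i j]
        rw [← hΦtot, Fintype.sum_prod_type]
      rw [hsum, Real.sq_sqrt hKpos.le]
      have hKD1 : K / D ≤ 1 := (div_le_one hD0).mpr hD.le
      nlinarith

end GapDuality

/-- **Corollary (bounding nonlinear spectral gaps by linear spectral gaps, via duality).**
Fix `n ∈ ℕ`, `K ∈ [1,∞)` and a metric space `X`.  The following are equivalent: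
(1) every `n × n` symmetric stochastic matrix `A` satisfies `γ(A,d_X²) ≤ K/(1-λ₂(A))`;
(2) for every `D ∈ (K,∞)` and every `x₁,…,xₙ ∈ X` there is a nonconstant mapping
`f : {x₁,…,xₙ} → ℓ₂` (recorded via its values `f i` at `x i` together with its Lipschitz
constant `L > 0`) with `∑ᵢ∑ⱼ ‖f(xᵢ)-f(xⱼ)‖² ≥ (L²/D)·∑ᵢ∑ⱼ d(xᵢ,xⱼ)²`. -/
theorem linear_vs_nonlinear_gap_duality {n : ℕ} (K : ℝ) (hK : 1 ≤ K)
    (X : Type*) [MetricSpace X] :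
    (∀ A : Matrix (Fin n) (Fin n) ℝ, IsSymmStochastic A →
        gammaNL A X 2 ≤ ENNReal.ofReal K / ENNReal.ofReal (1 - lambdaTwo A)) ↔
      (∀ D : ℝ, K < D → ∀ x : Fin n → X,
        ∃ (f : Fin n → lp (fun _ : ℕ => ℝ) 2) (L : ℝ),
          0 < L ∧
          (∀ i j, ‖f i - f j‖ ≤ L * dist (x i) (x j)) ∧
          L ^ 2 / D * ∑ i, ∑ j, dist (x i) (x j) ^ 2 ≤
            ∑ i, ∑ j, ‖f i - f j‖ ^ 2) := by
  constructor
  · intro h1 D hD x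
    exact GapDuality.dir_1_to_2 hK X h1 D hD x
  · intro h2 A hA
    exact GapDuality.dir_2_to_1 hK X h2 A hA
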